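/- Let k(x,y) = |y|^{α−n} if |x|/2 ≤ |y| < |x| and 0 otherwise, on ℝ^n × ℝ^n with 0 < α < n. Then for each x ≠ 0, the rearrangement of k(x,·) satisfies k₁*(x,t) ≤ |B₁|^{(n−α)/n} t^{−(n−α)/n} for all t > 0, so that sup_x ∫_1^∞ k₁*(x,t)^{n/(n−α)} dt < ∞, while the pointwise supremum k₁*(t) = |B₁|^{(n−α)/n} t^{−(n−α)/n} has ∫_1^∞ k₁*(t)^{n/(n−α)} dt = +∞. -/

import Mathlib

open MeasureTheory Set Metric ENNReal

/-- For the kernel `k(x,y) = |y|^{α−n} 𝟙_{|x|/2 ≤ |y| < |x|}` on `ℝ^n`: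
(i) for each `x ≠ 0`, `k₁*(x,t) ≤ |B₁|^{(n−α)/n} t^{−(n−α)/n}`;
(ii) hence `sup_x ∫_1^∞ k₁*(x,t)^{n/(n−α)} dt < ∞`;
(iii) yet `∫_1^∞ (|B₁|^{(n−α)/n} t^{−(n−α)/n})^{n/(n−α)} dt = ∞` for the pointwise
supremum `k₁*(t) = |B₁|^{(n−α)/n} t^{−(n−α)/n}`. -/
theorem stmt_16 (n : ℕ) (hn : 0 < n) (α : ℝ) (hα : 0 < α) (hαn : α < n) :
    (∀ x : EuclideanSpace ℝ (Fin n), x ≠ 0 → ∀ t : ℝ, 0 < t →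
      sInf {s : ℝ | 0 < s ∧
          volume {y : EuclideanSpace ℝ (Fin n) |
              s < if ‖x‖ / 2 ≤ ‖y‖ ∧ ‖y‖ < ‖x‖ then ‖y‖ ^ (α - (n : ℝ)) else 0}
            ≤ ENNReal.ofReal t}
        ≤ (volume (ball (0 : EuclideanSpace ℝ (Fin n)) 1)).toReal ^ (((n : ℝ) - α) / n)
            * t ^ (-(((n : ℝ) - α) / n))) ∧
    (∃ C : ℝ≥0∞, C < ⊤ ∧ ∀ x : EuclideanSpace ℝ (Fin n), x ≠ 0 →
      (∫⁻ t in Ioi (1 : ℝ), ENNReal.ofReal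
          ((sInf {s : ℝ | 0 < s ∧
              volume {y : EuclideanSpace ℝ (Fin n) |
                  s < if ‖x‖ / 2 ≤ ‖y‖ ∧ ‖y‖ < ‖x‖ then ‖y‖ ^ (α - (n : ℝ)) else 0}
                ≤ ENNReal.ofReal t}) ^ ((n : ℝ) / ((n : ℝ) - α))))
        ≤ C) ∧
    (∫⁻ t in Ioi (1 : ℝ), ENNReal.ofReal
        (((volume (ball (0 : EuclideanSpace ℝ (Fin n)) 1)).toReal ^ (((n : ℝ) - α) / n)
            * t ^ (-(((n : ℝ) - α) / n))) ^ ((n : ℝ) / ((n : ℝ) - α))))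
      = ⊤ := by
  have hn' : (0 : ℝ) < n := Nat.cast_pos.mpr hn
  have hna : (0 : ℝ) < (n : ℝ) - α := by linarith
  haveI : Nontrivial (EuclideanSpace ℝ (Fin n)) :=
    Module.nontrivial_of_finrank_pos (R := ℝ)
      (by rw [finrank_euclideanSpace_fin]; exact hn)
  have hfr : Module.finrank ℝ (EuclideanSpace ℝ (Fin n)) = n := finrank_euclideanSpace_fin
  set c := (volume (ball (0 : EuclideanSpace ℝ (Fin n)) 1)).toReal with hc_def
  have hc : 0 < c :=
    ENNReal.toReal_pos (measure_ball_pos _ _ one_pos).ne' measure_ball_lt_top.ne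
  have hvol : volume (ball (0 : EuclideanSpace ℝ (Fin n)) 1) = ENNReal.ofReal c :=
    (ENNReal.ofReal_toReal measure_ball_lt_top.ne).symm
  have hball : ∀ r : ℝ, 0 ≤ r →
      volume (ball (0 : EuclideanSpace ℝ (Fin n)) r) = ENNReal.ofReal (r ^ n * c) := by
    intro r hr
    rw [Measure.addHaar_ball _ _ hr, hfr, hvol, ← ENNReal.ofReal_mul (pow_nonneg hr n)]
  set e := ((n : ℝ) - α) / n with he_def
  have he : 0 < e := div_pos hna hn'
  have hne : e ≠ 0 := he.ne'
  have hp : (n : ℝ) / ((n : ℝ) - α) = e⁻¹ := (inv_div _ _).symm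
  have han : α - (n : ℝ) < 0 := by linarith
  -- membership of the superlevel sets into balls
  have key : ∀ x : EuclideanSpace ℝ (Fin n), x ≠ 0 → ∀ s : ℝ, 0 < s →
      {y : EuclideanSpace ℝ (Fin n) |
          s < if ‖x‖ / 2 ≤ ‖y‖ ∧ ‖y‖ < ‖x‖ then ‖y‖ ^ (α - (n : ℝ)) else 0}
        ⊆ ball (0 : EuclideanSpace ℝ (Fin n)) (s ^ (α - (n : ℝ))⁻¹) := by
    intro x hx s hs y hy
    simp only [mem_setOf_eq] at hy
    by_cases hcond : ‖x‖ / 2 ≤ ‖y‖ ∧ ‖y‖ < ‖x‖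
    · rw [if_pos hcond] at hy
      have hxpos : 0 < ‖x‖ := norm_pos_iff.mpr hx
      have hypos : 0 < ‖y‖ := lt_of_lt_of_le (by linarith) hcond.1
      rw [mem_ball_zero_iff]
      exact (Real.lt_rpow_inv_iff_of_neg hypos hs han).mpr hy
    · rw [if_neg hcond] at hy; linarith
  have key2 : ∀ x : EuclideanSpace ℝ (Fin n), ∀ s : ℝ, 0 < s →
      {y : EuclideanSpace ℝ (Fin n) |
          s < if ‖x‖ / 2 ≤ ‖y‖ ∧ ‖y‖ < ‖x‖ then ‖y‖ ^ (α - (n : ℝ)) else 0}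
        ⊆ ball (0 : EuclideanSpace ℝ (Fin n)) ‖x‖ := by
    intro x s hs y hy
    simp only [mem_setOf_eq] at hy
    by_cases hcond : ‖x‖ / 2 ≤ ‖y‖ ∧ ‖y‖ < ‖x‖
    · exact mem_ball_zero_iff.mpr hcond.2
    · rw [if_neg hcond] at hy; linarith
  -- part (i)
  have part1 : ∀ x : EuclideanSpace ℝ (Fin n), x ≠ 0 → ∀ t : ℝ, 0 < t →
      sInf {s : ℝ | 0 < s ∧
          volume {y : EuclideanSpace ℝ (Fin n) |
              s < if ‖x‖ / 2 ≤ ‖y‖ ∧ ‖y‖ < ‖x‖ then ‖y‖ ^ (α - (n : ℝ)) else 0}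
            ≤ ENNReal.ofReal t}
        ≤ c ^ e * t ^ (-e) := by
    intro x hx t ht
    have hB : 0 < c ^ e * t ^ (-e) :=
      mul_pos (Real.rpow_pos_of_pos hc _) (Real.rpow_pos_of_pos ht _)
    apply csInf_le ⟨0, fun s hs => hs.1.le⟩
    refine ⟨hB, ?_⟩
    refine le_trans (measure_mono (key x hx _ hB)) ?_
    set r := (c ^ e * t ^ (-e)) ^ (α - (n : ℝ))⁻¹ with hr_def
    have hr : 0 ≤ r := Real.rpow_nonneg hB.le _
    rw [hball r hr]
    apply ENNReal.ofReal_le_ofReal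
    have h0 : α - (n : ℝ) ≠ 0 := han.ne
    have hexp : (α - (n : ℝ))⁻¹ * (n : ℝ) = -e⁻¹ := by
      rw [he_def, inv_div]
      field_simp [h0]
      ring
    have hrn : r ^ n * c = t := by
      rw [← Real.rpow_natCast r n, hr_def, ← Real.rpow_mul hB.le, hexp,
        Real.mul_rpow (Real.rpow_nonneg hc.le _) (Real.rpow_nonneg ht.le _),
        ← Real.rpow_mul hc.le, ← Real.rpow_mul ht.le]
      have h1 : e * -e⁻¹ = -1 := by field_simp
      have h2 : -e * -e⁻¹ = 1 := by field_simp
      rw [h1, h2, Real.rpow_neg_one, Real.rpow_one]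
      field_simp
    linarith [hrn]
  refine ⟨part1, ?_, ?_⟩
  · -- part (ii)
    refine ⟨ENNReal.ofReal (c * 2 ^ n), ENNReal.ofReal_lt_top, ?_⟩
    intro x hx
    have hxpos : 0 < ‖x‖ := norm_pos_iff.mpr hx
    set s₀ := (‖x‖ / 2) ^ (α - (n : ℝ)) with hs₀_def
    have hs₀ : 0 < s₀ := Real.rpow_pos_of_pos (by positivity) _
    set M := c * ‖x‖ ^ n with hM_def
    -- the sInf is bounded by s₀ for every t ≥ 0
    have hub : ∀ t : ℝ, 0 ≤ t →
        sInf {s : ℝ | 0 < s ∧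
            volume {y : EuclideanSpace ℝ (Fin n) |
                s < if ‖x‖ / 2 ≤ ‖y‖ ∧ ‖y‖ < ‖x‖ then ‖y‖ ^ (α - (n : ℝ)) else 0}
              ≤ ENNReal.ofReal t} ≤ s₀ := by
      intro t ht
      apply csInf_le ⟨0, fun s hs => hs.1.le⟩
      refine ⟨hs₀, ?_⟩
      have hempty : {y : EuclideanSpace ℝ (Fin n) |
          s₀ < if ‖x‖ / 2 ≤ ‖y‖ ∧ ‖y‖ < ‖x‖ then ‖y‖ ^ (α - (n : ℝ)) else 0} = ∅ := by
        apply eq_empty_iff_forall_notMem.mpr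
        intro y hy
        simp only [mem_setOf_eq] at hy
        by_cases hcond : ‖x‖ / 2 ≤ ‖y‖ ∧ ‖y‖ < ‖x‖
        · rw [if_pos hcond] at hy
          have : ‖y‖ ^ (α - (n : ℝ)) ≤ s₀ :=
            Real.rpow_le_rpow_of_nonpos (by positivity) hcond.1 han.le
          linarith
        · rw [if_neg hcond] at hy; linarith
      rw [hempty, measure_empty]
      exact bot_le
    -- for t ≥ M the sInf vanishes
    have hzero : ∀ t : ℝ, M ≤ t →
        sInf {s : ℝ | 0 < s ∧
            volume {y : EuclideanSpace ℝ (Fin n) |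
                s < if ‖x‖ / 2 ≤ ‖y‖ ∧ ‖y‖ < ‖x‖ then ‖y‖ ^ (α - (n : ℝ)) else 0}
              ≤ ENNReal.ofReal t} = 0 := by
      intro t htM
      have hset : {s : ℝ | 0 < s ∧
          volume {y : EuclideanSpace ℝ (Fin n) |
              s < if ‖x‖ / 2 ≤ ‖y‖ ∧ ‖y‖ < ‖x‖ then ‖y‖ ^ (α - (n : ℝ)) else 0}
            ≤ ENNReal.ofReal t} = Ioi (0 : ℝ) := by
        ext s
        simp only [mem_setOf_eq, mem_Ioi]
        constructor
        · exact fun h => h.1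
        · intro hs
          refine ⟨hs, ?_⟩
          refine le_trans (measure_mono (key2 x s hs)) ?_
          rw [hball _ hxpos.le]
          apply ENNReal.ofReal_le_ofReal
          rw [hM_def] at htM; linarith [mul_comm (‖x‖ ^ n) c]
        -- done
      rw [hset, csInf_Ioi]
    have hnonneg : ∀ t : ℝ,
        0 ≤ sInf {s : ℝ | 0 < s ∧
            volume {y : EuclideanSpace ℝ (Fin n) |
                s < if ‖x‖ / 2 ≤ ‖y‖ ∧ ‖y‖ < ‖x‖ then ‖y‖ ^ (α - (n : ℝ)) else 0}
              ≤ ENNReal.ofReal t} := by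
      intro t
      exact Real.sInf_nonneg fun s hs => hs.1.le
    simp_rw [hp]
    calc (∫⁻ t in Ioi (1 : ℝ), ENNReal.ofReal
          ((sInf {s : ℝ | 0 < s ∧
              volume {y : EuclideanSpace ℝ (Fin n) |
                  s < if ‖x‖ / 2 ≤ ‖y‖ ∧ ‖y‖ < ‖x‖ then ‖y‖ ^ (α - (n : ℝ)) else 0}
                ≤ ENNReal.ofReal t}) ^ (e⁻¹)))
        ≤ ∫⁻ t in Ioi (1 : ℝ),
            (Ioc (1 : ℝ) M).indicator (fun _ => ENNReal.ofReal (s₀ ^ e⁻¹)) t := by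
          apply setLIntegral_mono (measurable_const.indicator measurableSet_Ioc)
          intro t ht
          by_cases htM : t ≤ M
          · rw [indicator_of_mem (mem_Ioc.mpr ⟨mem_Ioi.mp ht, htM⟩)]
            exact ENNReal.ofReal_le_ofReal
              (Real.rpow_le_rpow (hnonneg t) (hub t (by linarith [mem_Ioi.mp ht]))
                (by positivity))
          · rw [indicator_of_notMem (fun h => htM h.2), hzero t (le_of_lt (not_le.mp htM)),
              Real.zero_rpow (inv_ne_zero hne), ENNReal.ofReal_zero]
      _ ≤ ENNReal.ofReal (s₀ ^ e⁻¹) * ENNReal.ofReal M := by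
          rw [lintegral_indicator measurableSet_Ioc, setLIntegral_const,
            Measure.restrict_apply measurableSet_Ioc]
          gcongr
          refine le_trans (measure_mono inter_subset_left) ?_
          rw [Real.volume_Ioc]
          exact ENNReal.ofReal_le_ofReal (by linarith)
      _ ≤ ENNReal.ofReal (c * 2 ^ n) := by
          rw [← ENNReal.ofReal_mul (Real.rpow_nonneg hs₀.le _)]
          apply ENNReal.ofReal_le_ofReal
          have hs₀e : s₀ ^ e⁻¹ = (2 / ‖x‖) ^ n := by
            rw [hs₀_def, ← Real.rpow_mul (by positivity)]
            have h0 : α - (n : ℝ) ≠ 0 := han.ne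
            have hexp : (α - (n : ℝ)) * e⁻¹ = -(n : ℝ) := by
              rw [he_def, inv_div]
              field_simp [h0]
              ring
            rw [hexp, Real.rpow_neg (by positivity), Real.rpow_natCast, ← inv_pow, inv_div]
          rw [hs₀e, hM_def]
          have : (2 / ‖x‖) ^ n * (c * ‖x‖ ^ n) = c * 2 ^ n := by
            have hxn : ‖x‖ ^ n ≠ 0 := by positivity
            rw [div_pow, div_mul_eq_mul_div, div_eq_iff hxn]; ring
          linarith [this]
  · -- part (iii)
    simp_rw [hp]
    rw [setLIntegral_congr_fun measurableSet_Ioi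
      ((fun t (ht : t ∈ Ioi (1 : ℝ)) => by
        have ht0 : (0 : ℝ) < t := lt_trans one_pos ht
        show ENNReal.ofReal ((c ^ e * t ^ (-e)) ^ e⁻¹) = ENNReal.ofReal (c * t⁻¹)
        rw [Real.mul_rpow (Real.rpow_nonneg hc.le _) (Real.rpow_nonneg ht0.le _),
          ← Real.rpow_mul hc.le, ← Real.rpow_mul ht0.le, mul_inv_cancel₀ hne,
          Real.rpow_one, neg_mul, mul_inv_cancel₀ hne, Real.rpow_neg_one]))]
    by_contra hfin
    have hint : IntegrableOn (fun t : ℝ => c * t⁻¹) (Ioi (1 : ℝ)) := by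
      constructor
      · exact (measurable_const.mul measurable_inv).aestronglyMeasurable
      · rw [hasFiniteIntegral_iff_ofReal]
        · exact lt_top_iff_ne_top.mpr hfin
        · filter_upwards [ae_restrict_mem measurableSet_Ioi] with t ht
          have : (0 : ℝ) < t := lt_trans one_pos ht
          positivity
    have h2 : IntegrableOn (fun t : ℝ => t ^ (-1 : ℝ)) (Ioi (1 : ℝ)) := by
      refine (hint.const_mul c⁻¹).congr ?_
      filter_upwards with t
      rw [Real.rpow_neg_one]
      field_simp
    rw [integrableOn_Ioi_rpow_iff zero_lt_one] at h2
    linarith
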